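/- Let X be a regular space with uncountable dispersion character that is generated by its subspaces of countable extent. If additionally X is not ω-resolvable and no nonempty open subset of X is ω-resolvable, then the set T = {x ∈ X : t(x, X) > ω} of points of uncountable tightness is dense in X. -/
import Mathlib

universe u

/-- A space has countable extent. -/
def CountableExtent (Y : Type u) [TopologicalSpace Y] : Prop :=
  ∀ A : Set Y, ¬ A.Countable → ∃ x : Y, AccPt x (Filter.principal A)

/-- A space is ω-resolvable. -/
def OmegaResolvable (X : Type u) [TopologicalSpace X] : Prop :=
  ∃ D : ℕ → Set X, (∀ n, Dense (D n)) ∧ Pairwise (Function.onFun Disjoint D)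

/-- The tightness of `x` in `X` is uncountable: there is a set `B` with
`x ∈ closure B` but `x` not in the closure of any countable subset of `B`. -/
def UncountableTightnessAt {X : Type u} [TopologicalSpace X] (x : X) : Prop :=
  ∃ B : Set X, x ∈ closure B ∧ ∀ B' ⊆ B, B'.Countable → x ∉ closure B'

section Aux

variable {X : Type u} [TopologicalSpace X]

/-- chains of sets linked by closure: transitivity -/
lemma chain_closure_aux {A : ℕ → Set X} (hA : ∀ n, A n ⊆ closure (A (n+1))) :
    ∀ {n m : ℕ}, n < m → A n ⊆ closure (A m) := by
  intro n m h
  induction m with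
  | zero => omega
  | succ m ih =>
    rcases Nat.lt_succ_iff_lt_or_eq.mp h with h' | h'
    · exact (ih h').trans (closure_minimal (hA m) isClosed_closure)
    · subst h'; exact hA n

/-- A "good" subset of `V`: union of a disjoint closure-chain of subsets of `V`. -/
def GoodIn (V Y : Set X) : Prop :=
  ∃ A : ℕ → Set X, Y = ⋃ n, A n ∧ (∀ n, A n ⊆ V) ∧ (∀ n, A n ⊆ closure (A (n+1))) ∧
    Pairwise (Function.onFun Disjoint A) ∧ (A 0).Nonempty

/-- Construction of a good subset of any nonempty `V` admitting the key step. -/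
lemma exists_goodIn (V : Set X) (hVne : V.Nonempty)
    (hL1 : ∀ x ∈ V, ∀ C : Set X, C.Countable →
      ∃ B : Set X, B.Countable ∧ B ⊆ V \ C ∧ x ∈ closure B) :
    ∃ Y, GoodIn V Y := by
  classical
  obtain ⟨x₀, hx₀⟩ := hVne
  -- choice function for the step
  set b : X → Set X → Set X := fun x C =>
    if h : x ∈ V ∧ C.Countable then (hL1 x h.1 C h.2).choose else ∅ with hb
  have hbspec : ∀ x ∈ V, ∀ C : Set X, C.Countable →
      (b x C).Countable ∧ b x C ⊆ V \ C ∧ x ∈ closure (b x C) := by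
    intro x hx C hC
    have h : x ∈ V ∧ C.Countable := ⟨hx, hC⟩
    simp only [hb, dif_pos h]
    exact (hL1 x h.1 C h.2).choose_spec
  -- recursive construction: (current set, accumulated set)
  set f : ℕ → Set X × Set X := fun n =>
    Nat.rec (({x₀}, {x₀}) : Set X × Set X)
      (fun _ p => ((⋃ x ∈ p.1, b x p.2), p.2 ∪ ⋃ x ∈ p.1, b x p.2)) n with hf
  have hf0 : f 0 = ({x₀}, {x₀}) := rfl
  have hfs : ∀ n, f (n+1) = ((⋃ x ∈ (f n).1, b x (f n).2),
      (f n).2 ∪ ⋃ x ∈ (f n).1, b x (f n).2) := fun n => rfl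
  -- invariants
  have key : ∀ n, (f n).1 ⊆ V ∧ (f n).2.Countable ∧ (f n).1 ⊆ (f n).2 := by
    intro n
    induction n with
    | zero =>
      refine ⟨?_, ?_, ?_⟩
      · simpa [hf0] using hx₀
      · simp [hf0]
      · simp [hf0]
    | succ n ih =>
      obtain ⟨h1, h2, h3⟩ := ih
      have hsubV : (⋃ x ∈ (f n).1, b x (f n).2) ⊆ V := by
        intro z hz
        simp only [Set.mem_iUnion] at hz
        obtain ⟨x, hx, hzx⟩ := hz
        exact ((hbspec x (h1 hx) _ h2).2.1 hzx).1
      have hcnt : (⋃ x ∈ (f n).1, b x (f n).2).Countable :=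
        Set.Countable.biUnion (h2.mono h3)
          (fun x hx => (hbspec x (h1 hx) _ h2).1)
      rw [hfs]
      exact ⟨hsubV, h2.union hcnt, Set.subset_union_right⟩
  -- the chain
  refine ⟨⋃ n, (f n).1, fun n => (f n).1, rfl, fun n => (key n).1, ?_, ?_, ?_⟩
  · -- closure chain
    intro n x hx
    have h2 := (key n).2.1
    have hspec := hbspec x ((key n).1 hx) _ h2
    refine closure_mono ?_ hspec.2.2
    show b x (f n).2 ⊆ (f (n+1)).1
    rw [hfs]
    exact Set.subset_biUnion_of_mem (u := fun x => b x (f n).2) hx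
  · -- pairwise disjoint
    have hstep : ∀ m, (f m).2 ⊆ (f (m+1)).2 := by
      intro m; rw [hfs]; exact Set.subset_union_left
    have hmono : ∀ n m, n ≤ m → (f n).2 ⊆ (f m).2 := by
      intro n m h
      induction h with
      | refl => exact Set.Subset.rfl
      | step h' ih => exact ih.trans (hstep _)
    have hdisj : ∀ n, Disjoint ((f (n+1)).1) ((f n).2) := by
      intro n
      rw [Set.disjoint_left]
      intro z hz hz2
      rw [hfs] at hz
      simp only [Set.mem_iUnion] at hz
      obtain ⟨x, hx, hzx⟩ := hz
      exact ((hbspec x ((key n).1 hx) _ (key n).2.1).2.1 hzx).2 hz2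
    have main : ∀ i j, i < j → Disjoint ((f i).1) ((f j).1) := by
      intro i j hij
      obtain ⟨m, rfl⟩ : ∃ m, j = m + 1 := ⟨j - 1, by omega⟩
      have : (f i).1 ⊆ (f m).2 := (key i).2.2.trans (hmono i m (by omega))
      exact (Set.disjoint_of_subset_left this (hdisj m).symm).symm.symm
    intro i j hij
    rcases Nat.lt_or_ge i j with h | h
    · exact main i j h
    · exact (main j i (by omega)).symm
  · exact ⟨x₀, by simp [hf0]⟩

end Aux

theorem dense_uncountable_tightness {X : Type u} [TopologicalSpace X] [T3Space X]
    (hΔ : ∀ U : Set X, IsOpen U → U.Nonempty → ¬ U.Countable)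
    (hgen : ∀ A : Set X,
      (∀ Y : Set X, CountableExtent Y → IsClosed ((↑) ⁻¹' A : Set Y)) → IsClosed A)
    (hnr : ¬ OmegaResolvable X)
    (hno : ∀ U : Set X, IsOpen U → U.Nonempty → ¬ OmegaResolvable U) :
    Dense {x : X | UncountableTightnessAt x} := by
  classical
  by_contra hnd
  rw [dense_iff_inter_open] at hnd
  push_neg at hnd
  obtain ⟨U, hUo, hUne, hUT⟩ := hnd
  -- every point of U has countable tightness
  have ht : ∀ x ∈ U, ∀ B : Set X, x ∈ closure B →
      ∃ B' ⊆ B, B'.Countable ∧ x ∈ closure B' := by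
    intro x hx B hB
    by_contra hcon
    push_neg at hcon
    have : x ∈ U ∩ {x : X | UncountableTightnessAt x} :=
      ⟨hx, ⟨B, hB, fun B' hB' hc => hcon B' hB' hc⟩⟩
    rw [hUT] at this
    exact this
  -- key step lemma, for any open V ⊆ U
  have hL1 : ∀ V : Set X, IsOpen V → V ⊆ U → ∀ x ∈ V, ∀ C : Set X, C.Countable →
      ∃ B : Set X, B.Countable ∧ B ⊆ V \ C ∧ x ∈ closure B := by
    intro V hVo hVU x hx C hC
    have hcl : x ∈ closure (V \ C) := by
      rw [mem_closure_iff]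
      intro o ho hxo
      have hoV : IsOpen (o ∩ V) := ho.inter hVo
      have hne : (o ∩ V).Nonempty := ⟨x, hxo, hx⟩
      have := hΔ (o ∩ V) hoV hne
      by_contra hemp
      apply this
      apply hC.mono
      intro z hz
      by_contra hzC
      exact hemp ⟨z, hz.1, hz.2, hzC⟩
    obtain ⟨B', hB'sub, hB'c, hB'cl⟩ := ht x (hVU hx) (V \ C) hcl
    exact ⟨B', hB'c, hB'sub, hB'cl⟩
  -- Zorn: maximal pairwise disjoint family of good subsets of U
  set P : Set (Set (Set X)) := {F | (∀ Y ∈ F, GoodIn U Y) ∧ F.Pairwise Disjoint} with hP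
  obtain ⟨F, hFmax⟩ := zorn_subset P (by
    intro c hc hchain
    refine ⟨⋃₀ c, ⟨?_, ?_⟩, fun s hs => Set.subset_sUnion_of_mem hs⟩
    · rintro Y ⟨F, hF, hYF⟩
      exact (hc hF).1 Y hYF
    · intro Y hY Z hZ hYZ
      obtain ⟨F₁, hF₁, hYF₁⟩ := hY
      obtain ⟨F₂, hF₂, hZF₂⟩ := hZ
      rcases hchain.total hF₁ hF₂ with h | h
      · exact (hc hF₂).2 (h hYF₁) hZF₂ hYZ
      · exact (hc hF₁).2 hYF₁ (h hZF₂) hYZ)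
  have hFP : F ∈ P := hFmax.1
  -- the union of F is dense in U
  have hdense : U ⊆ closure (⋃₀ F) := by
    by_contra hcon
    rw [Set.not_subset] at hcon
    obtain ⟨x, hxU, hxcl⟩ := hcon
    set V : Set X := U ∩ (closure (⋃₀ F))ᶜ with hV
    have hVo : IsOpen V := hUo.inter isClosed_closure.isOpen_compl
    have hVU : V ⊆ U := Set.inter_subset_left
    have hVne : V.Nonempty := ⟨x, hxU, hxcl⟩
    obtain ⟨Y, hY⟩ := exists_goodIn V hVne (hL1 V hVo hVU)
    obtain ⟨A, hYA, hAV, hAcl, hAdisj, hA0⟩ := hY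
    have hYV : Y ⊆ V := by rw [hYA]; exact Set.iUnion_subset hAV
    have hYgood : GoodIn U Y := ⟨A, hYA, fun n => (hAV n).trans hVU, hAcl, hAdisj, hA0⟩
    have hYne : Y.Nonempty := by
      obtain ⟨z, hz⟩ := hA0
      exact ⟨z, hYA ▸ Set.mem_iUnion.mpr ⟨0, hz⟩⟩
    have hYnotF : Y ∉ F := by
      intro hYF
      obtain ⟨z, hz⟩ := hYne
      exact (hYV hz).2 (subset_closure (Set.mem_sUnion.mpr ⟨Y, hYF, hz⟩))
    have hins : insert Y F ∈ P := by
      constructor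
      · rintro Z (rfl | hZ)
        · exact hYgood
        · exact hFP.1 Z hZ
      · refine Set.Pairwise.insert hFP.2 ?_
        intro Z hZ hYZ
        have hd : Disjoint Y Z := by
          rw [Set.disjoint_left]
          intro z hzY hzZ
          exact (hYV hzY).2 (subset_closure (Set.mem_sUnion.mpr ⟨Z, hZ, hzZ⟩))
        exact ⟨hd, hd.symm⟩
    have := hFmax.2 hins (Set.subset_insert Y F)
    exact hYnotF (this (Set.mem_insert Y F))
  -- choose chains for the good sets
  set g : Set X → (ℕ → Set X) := fun Y =>
    if h : GoodIn U Y then h.choose else fun _ => ∅ with hg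
  have hgspec : ∀ Y ∈ F, Y = (⋃ n, g Y n) ∧ (∀ n, g Y n ⊆ U) ∧
      (∀ n, g Y n ⊆ closure (g Y (n+1))) ∧ Pairwise (Function.onFun Disjoint (g Y)) := by
    intro Y hY
    have h : GoodIn U Y := hFP.1 Y hY
    simp only [hg, dif_pos h]
    obtain ⟨h1, h2, h3, h4, _⟩ := h.choose_spec
    exact ⟨h1, h2, h3, h4⟩
  -- the ω many disjoint dense sets
  set D : ℕ → Set X := fun k => ⋃ Y ∈ F, ⋃ m : ℕ, g Y (Nat.pair k m) with hD
  have hDU : ∀ k, D k ⊆ U := by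
    intro k z hz
    simp only [hD, Set.mem_iUnion] at hz
    obtain ⟨Y, hY, m, hzm⟩ := hz
    exact (hgspec Y hY).2.1 _ hzm
  have hDdense : ∀ k, U ⊆ closure (D k) := by
    intro k
    have hsub : ⋃₀ F ⊆ closure (D k) := by
      rintro z ⟨Y, hYF, hzY⟩
      obtain ⟨hYeq, _, hYcl, _⟩ := hgspec Y hYF
      rw [hYeq] at hzY
      obtain ⟨n, hzn⟩ := Set.mem_iUnion.mp hzY
      have hlt : n < Nat.pair k (n+1) := Nat.lt_of_lt_of_le (Nat.lt_succ_self n)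
        (Nat.right_le_pair k (n+1))
      have : z ∈ closure (g Y (Nat.pair k (n+1))) := chain_closure_aux hYcl hlt hzn
      refine closure_mono ?_ this
      intro w hw
      simp only [hD, Set.mem_iUnion]
      exact ⟨Y, hYF, n+1, hw⟩
    exact hdense.trans (closure_minimal hsub isClosed_closure)
  have hDdisj : Pairwise (Function.onFun Disjoint D) := by
    intro k k' hkk'
    rw [Function.onFun, Set.disjoint_left]
    intro z hz hz'
    simp only [hD, Set.mem_iUnion] at hz hz'
    obtain ⟨Y, hY, m, hzm⟩ := hz
    obtain ⟨Y', hY', m', hzm'⟩ := hz'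
    by_cases hYY' : Y = Y'
    · subst hYY'
      have hne : Nat.pair k m ≠ Nat.pair k' m' := by
        intro h
        exact hkk' (Nat.pair_eq_pair.mp h).1
      exact Set.disjoint_left.mp ((hgspec Y hY).2.2.2 hne) hzm hzm'
    · have hzY : z ∈ Y := by
        rw [(hgspec Y hY).1]; exact Set.mem_iUnion.mpr ⟨Nat.pair k m, hzm⟩
      have hzY' : z ∈ Y' := by
        rw [(hgspec Y' hY').1]; exact Set.mem_iUnion.mpr ⟨Nat.pair k' m', hzm'⟩
      exact Set.disjoint_left.mp (hFP.2 hY hY' hYY') hzY hzY'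
  -- contradiction with hno
  apply hno U hUo hUne
  refine ⟨fun k => (↑) ⁻¹' (D k), ?_, ?_⟩
  · intro k
    rw [dense_iff_closure_eq, Set.eq_univ_iff_forall]
    intro x
    rw [closure_subtype]
    have himg : Subtype.val '' ((↑) ⁻¹' (D k) : Set U) = D k := by
      rw [Subtype.image_preimage_coe]
      exact Set.inter_eq_right.mpr (hDU k)
    rw [himg]
    exact hDdense k x.2
  · intro k k' hkk'
    exact Disjoint.preimage _ (hDdisj hkk')
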